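/- Low-density convergence to the free set: if x ∈ {0,1}^ℤ satisfies ρ₊(x,1) ≤ 1/2 and additionally there exist n,m ∈ ℤ₊ such that every window x[i, i+m-1] with i ≥ n has at most half its entries equal to one, then dist(T^t x, Free) ≤ C·2^{-t} for some constant C and all t ≥ 0. -/

import Mathlib

open Filter

/-- The traffic map T (simultaneous 10 → 01). -/
def T (x : ℤ → ℕ) : ℤ → ℕ :=
  fun i => x i + min (x (i - 1)) (1 - x i) - min (x i) (1 - x (i + 1))

/-- The metric dist(x,y) = Σᵢ 2^{-|i|} |xᵢ - yᵢ|. -/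
noncomputable def cdist (x y : ℤ → ℕ) : ℝ :=
  ∑' i : ℤ, (2 : ℝ) ^ (-|i|) * |(x i : ℝ) - (y i : ℝ)|

/-- The set Free of binary configurations with no two consecutive ones. -/
def FreeSet : Set (ℤ → ℕ) := {y | (∀ i, y i ≤ 1) ∧ ∀ i : ℤ, y i * y (i + 1) = 0}

/-- Distance from x to the set Free. -/
noncomputable def distToFree (x : ℤ → ℕ) : ℝ :=
  sInf ((fun y => cdist x y) '' FreeSet)

/-- Average of ones in the window x[-n, m]. -/
noncomputable def winAvg (x : ℤ → ℕ) (p : ℕ × ℕ) : ℝ :=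
  (∑ i ∈ Finset.Icc (-(p.1 : ℤ)) (p.2 : ℤ), (x i : ℝ)) / (p.1 + p.2 + 1)

/-- Upper density ρ₊(x,1). -/
noncomputable def rhoPlus (x : ℤ → ℕ) : ℝ :=
  Filter.limsup (winAvg x) (Filter.atTop ×ˢ Filter.atTop)

/-- cumulative sum with base point 0 -/
noncomputable def Fc (g : ℤ → ℤ) (j : ℤ) : ℤ :=
  if 0 ≤ j then ∑ k ∈ Finset.Icc 1 j, g k else -∑ k ∈ Finset.Icc (j+1) 0, g k

lemma Fc_zero (g : ℤ → ℤ) : Fc g 0 = 0 := by simp [Fc]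

lemma Fc_step (g : ℤ → ℤ) (j : ℤ) : Fc g j = Fc g (j - 1) + g j := by
  rcases lt_trichotomy j 0 with h | h | h
  · have h1 : ¬ (0 ≤ j) := by omega
    have h2 : ¬ (0 ≤ j - 1) := by omega
    have e : j - 1 + 1 = j := by omega
    have hnot : j ∉ Finset.Icc (j+1) 0 := by simp only [Finset.mem_Icc]; omega
    have hins : Finset.Icc j 0 = insert j (Finset.Icc (j+1) 0) := by
      ext k; simp only [Finset.mem_Icc, Finset.mem_insert]; omega
    have hsum : (∑ k ∈ Finset.Icc j 0, g k) = g j + ∑ k ∈ Finset.Icc (j+1) 0, g k := by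
      rw [hins, Finset.sum_insert hnot]
    rw [Fc, Fc, if_neg h1, if_neg h2, e, hsum]
    ring
  · subst h
    have e : Finset.Icc ((0:ℤ) - 1 + 1) 0 = {0} := by norm_num
    rw [Fc, Fc, if_pos le_rfl, if_neg (by omega), e]
    simp
  · have h1 : (0:ℤ) ≤ j := by omega
    have h2 : (0:ℤ) ≤ j - 1 := by omega
    have hnot : j ∉ Finset.Icc 1 (j-1) := by simp only [Finset.mem_Icc]; omega
    have hins : Finset.Icc (1:ℤ) j = insert j (Finset.Icc 1 (j-1)) := by
      ext k; simp only [Finset.mem_Icc, Finset.mem_insert]; omega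
    rw [Fc, Fc, if_pos h1, if_pos h2, hins, Finset.sum_insert hnot]
    ring

lemma Fc_diff (g : ℤ → ℤ) (a : ℤ) : ∀ b, a ≤ b →
    Fc g b - Fc g a = ∑ k ∈ Finset.Icc (a+1) b, g k := by
  refine Int.le_induction ?_ ?_
  · simp [Finset.Icc_eq_empty_of_lt (by omega : a < a + 1)]
  · intro b hb ih
    have hnot : b + 1 ∉ Finset.Icc (a+1) b := by simp only [Finset.mem_Icc]; omega
    have hins : Finset.Icc (a+1) (b+1) = insert (b+1) (Finset.Icc (a+1) b) := by
      ext k; simp only [Finset.mem_Icc, Finset.mem_insert]; omega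
    have hs := Fc_step g (b+1)
    have e : b + 1 - 1 = b := by omega
    rw [e] at hs
    rw [hins, Finset.sum_insert hnot, hs]
    omega

lemma T_le_one {y : ℤ → ℕ} (hy : ∀ i, y i ≤ 1) (i : ℤ) : T y i ≤ 1 := by
  have h1 := hy (i-1); have h2 := hy i; have h3 := hy (i+1)
  rcases Nat.le_one_iff_eq_zero_or_eq_one.mp h1 with e1 | e1 <;>
    rcases Nat.le_one_iff_eq_zero_or_eq_one.mp h2 with e2 | e2 <;>
      rcases Nat.le_one_iff_eq_zero_or_eq_one.mp h3 with e3 | e3 <;>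
        simp [T, e1, e2, e3]

lemma iter_le_one {x : ℤ → ℕ} (hx : ∀ i, x i ≤ 1) (t : ℕ) : ∀ i, T^[t] x i ≤ 1 := by
  induction t with
  | zero => simpa
  | succ t ih =>
      rw [Function.iterate_succ_apply']
      exact T_le_one ih

/-- increments of the min-evolved height -/
lemma minH_step {y : ℤ → ℕ} (hy : ∀ i, y i ≤ 1) (i : ℤ) :
    min (Fc (fun k => 1 - 2 * (y k : ℤ)) (i-1)) (Fc (fun k => 1 - 2 * (y k : ℤ)) (i+1))
      - min (Fc (fun k => 1 - 2 * (y k : ℤ)) (i-2)) (Fc (fun k => 1 - 2 * (y k : ℤ)) i)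
      = 1 - 2 * (T y i : ℤ) := by
  set g : ℤ → ℤ := fun k => 1 - 2 * (y k : ℤ) with hg
  have e1 : Fc g (i-1) = Fc g (i-2) + (1 - 2 * (y (i-1) : ℤ)) := by
    have := Fc_step g (i-1); rw [show i - 1 - 1 = i - 2 by omega] at this; exact this
  have e2 : Fc g i = Fc g (i-1) + (1 - 2 * (y i : ℤ)) := Fc_step g i
  have e3 : Fc g (i+1) = Fc g i + (1 - 2 * (y (i+1) : ℤ)) := by
    have := Fc_step g (i+1); rw [show i + 1 - 1 = i by omega] at this; exact this
  have h1 := hy (i-1); have h2 := hy i; have h3 := hy (i+1)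
  rcases Nat.le_one_iff_eq_zero_or_eq_one.mp h1 with f1 | f1 <;>
    rcases Nat.le_one_iff_eq_zero_or_eq_one.mp h2 with f2 | f2 <;>
      rcases Nat.le_one_iff_eq_zero_or_eq_one.mp h3 with f3 | f3 <;>
        · simp only [T, f1, f2, f3] at e1 e2 e3 ⊢
          push_cast
          omega

/-- height at time t -/
noncomputable def Ht (x : ℤ → ℕ) (t : ℕ) : ℤ → ℤ := Fc (fun k => 1 - 2 * (T^[t] x k : ℤ))

lemma Ht_succ {x : ℤ → ℕ} (hx : ∀ i, x i ≤ 1) (t : ℕ) (i : ℤ) :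
    Ht x (t+1) i = min (Ht x t (i-1)) (Ht x t (i+1)) - min (Ht x t (-1)) (Ht x t 1) := by
  have hy : ∀ i, T^[t] x i ≤ 1 := iter_le_one hx t
  have key : ∀ j : ℤ, Ht x (t+1) j - Ht x (t+1) (j-1)
      = min (Ht x t (j-1)) (Ht x t (j+1)) - min (Ht x t (j-2)) (Ht x t j) := by
    intro j
    have h1 : Ht x (t+1) j = Ht x (t+1) (j-1) + (1 - 2 * (T^[t+1] x j : ℤ)) :=
      Fc_step _ j
    have h2 := minH_step hy j
    have h3 : T (T^[t] x) j = T^[t+1] x j := by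
      rw [Function.iterate_succ_apply']
    rw [h3] at h2
    have h4 : min (Fc (fun k => 1 - 2 * (T^[t] x k : ℤ)) (j-1))
        (Fc (fun k => 1 - 2 * (T^[t] x k : ℤ)) (j+1)) = min (Ht x t (j-1)) (Ht x t (j+1)) := rfl
    have h5 : min (Fc (fun k => 1 - 2 * (T^[t] x k : ℤ)) (j-2))
        (Fc (fun k => 1 - 2 * (T^[t] x k : ℤ)) j) = min (Ht x t (j-2)) (Ht x t j) := rfl
    rw [h4, h5] at h2
    omega
  have base : Ht x (t+1) 0 = 0 := Fc_zero _
  induction i using Int.induction_on with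
  | zero =>
      rw [base, show (0:ℤ) - 1 = -1 by omega, show (0:ℤ) + 1 = 1 by omega]
      omega
  | succ k ih =>
      have hk := key ((k:ℤ)+1)
      rw [show ((k:ℤ)+1) - 1 = (k:ℤ) by omega, show ((k:ℤ)+1) - 2 = (k:ℤ) - 1 by omega] at hk
      rw [show ((k:ℤ)+1) - 1 = (k:ℤ) by omega]
      omega
  | pred k ih =>
      have hk := key (-(k:ℤ))
      rw [show -(k:ℤ) - 2 = -(k:ℤ) - 1 - 1 by omega] at hk
      rw [show -(k:ℤ) - 1 + 1 = -(k:ℤ) by omega]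
      omega

/-- parity-restricted window -/
noncomputable def Sp (c : ℤ) (t : ℕ) : Finset ℤ :=
  (Finset.Icc (c - t) (c + t)).filter (fun j => (c + t - j) % 2 = 0)

lemma Sp_nonempty (c : ℤ) (t : ℕ) : (Sp c t).Nonempty := by
  refine ⟨c + t, ?_⟩
  simp only [Sp, Finset.mem_filter, Finset.mem_Icc]
  omega

noncomputable def Mt (x : ℤ → ℕ) (t : ℕ) (c : ℤ) : ℤ := (Sp c t).inf' (Sp_nonempty c t) (Ht x 0)

lemma Sp_union (c : ℤ) (t : ℕ) : Sp c (t+1) = Sp (c-1) t ∪ Sp (c+1) t := by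
  ext j
  simp only [Sp, Finset.mem_union, Finset.mem_filter, Finset.mem_Icc]
  push_cast
  omega

lemma Mt_succ (x : ℤ → ℕ) (t : ℕ) (c : ℤ) :
    Mt x (t+1) c = min (Mt x t (c-1)) (Mt x t (c+1)) := by
  rw [Mt, Mt, Mt]
  have h := Finset.inf'_union (Sp_nonempty (c-1) t) (Sp_nonempty (c+1) t) (Ht x 0)
  calc (Sp c (t+1)).inf' (Sp_nonempty c (t+1)) (Ht x 0)
      = ((Sp (c-1) t) ∪ (Sp (c+1) t)).inf'
          (by rw [← Sp_union]; exact Sp_nonempty c (t+1)) (Ht x 0) := by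
        congr 1 <;> simp [Sp_union]
    _ = _ := h

lemma Mt_zero (x : ℤ → ℕ) (c : ℤ) : Mt x 0 c = Ht x 0 c := by
  have : Sp c 0 = {c} := by
    ext j
    simp only [Sp, Finset.mem_filter, Finset.mem_Icc, Finset.mem_singleton]
    push_cast
    omega
  simp [Mt, this]

lemma Ht_eq {x : ℤ → ℕ} (hx : ∀ i, x i ≤ 1) (t : ℕ) (c : ℤ) :
    Ht x t c = Mt x t c - Mt x t 0 := by
  induction t generalizing c with
  | zero =>
      rw [Mt_zero, Mt_zero]
      have : Ht x 0 0 = 0 := Fc_zero _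
      omega
  | succ t ih =>
      rw [Ht_succ hx, Mt_succ, Mt_succ, ih, ih, ih, ih]
      rw [show (0:ℤ) - 1 = -1 by omega, show (0:ℤ) + 1 = 1 by omega]
      omega

lemma noJam {x : ℤ → ℕ} (hx : ∀ i, x i ≤ 1) (n m : ℕ) (hm : 0 < m)
    (hwin : ∀ i : ℤ, (n : ℤ) ≤ i →
      2 * (∑ j ∈ Finset.Icc i (i + (m : ℤ) - 1), (x j : ℤ)) ≤ m)
    (t : ℕ) (i : ℤ) (htm : (m:ℤ) ≤ t) (hi : (n:ℤ) + 2*m - 2 - t ≤ i) :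
    ¬(T^[t] x i = 1 ∧ T^[t] x (i+1) = 1) := by
  rintro ⟨h1, h2⟩
  -- height drop of 2 across the jam
  have hd : Ht x t (i+1) - Ht x t (i-1) = -2 := by
    have hdiff := Fc_diff (fun k => 1 - 2 * (T^[t] x k : ℤ)) (i-1) (i+1) (by omega)
    have hpair : Finset.Icc (i-1+1) (i+1) = ({i, i+1} : Finset ℤ) := by
      ext k; simp only [Finset.mem_Icc, Finset.mem_insert, Finset.mem_singleton]; omega
    rw [hpair, Finset.sum_pair (by omega : i ≠ i + 1), h1, h2] at hdiff
    have hdiff' : Ht x t (i+1) - Ht x t (i-1)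
        = (1 - 2 * ((1:ℕ) : ℤ)) + (1 - 2 * ((1:ℕ) : ℤ)) := hdiff
    rw [hdiff']
    norm_num
  rw [Ht_eq hx, Ht_eq hx] at hd
  have hM : Mt x t (i+1) = Mt x t (i-1) - 2 := by omega
  -- the min for c = i+1 is attained at the right edge
  obtain ⟨j, hjmem, hjeq⟩ := Finset.exists_mem_eq_inf' (Sp_nonempty (i+1) t) (Ht x 0)
  have hjedge : j = i + 1 + t := by
    by_contra hne
    have hjS : j ∈ Sp (i-1) t := by
      simp only [Sp, Finset.mem_filter, Finset.mem_Icc] at hjmem ⊢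
      omega
    have hle := Finset.inf'_le (Ht x 0) hjS
    rw [← Mt] at hle
    rw [← Mt] at hjeq
    omega
  rw [hjedge] at hjeq
  -- compare with the point 2m to the left
  have hj'S : (i + 1 + (t:ℤ) - 2*m) ∈ Sp (i-1) t := by
    simp only [Sp, Finset.mem_filter, Finset.mem_Icc]
    omega
  have hle := Finset.inf'_le (Ht x 0) hj'S
  rw [← Mt] at hle hjeq
  -- Ht x 0 (i+1+t) ≤ Ht x 0 (i+1+t-2m) - 2
  have hdrop : Ht x 0 (i+1+(t:ℤ)) ≤ Ht x 0 (i+1+(t:ℤ)-2*m) - 2 := by omega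
  -- translate into a window sum of x
  have hdiff := Fc_diff (fun k => 1 - 2 * (T^[0] x k : ℤ)) (i+1+(t:ℤ)-2*m) (i+1+(t:ℤ))
    (by omega)
  have hdiff2 : Ht x 0 (i+1+(t:ℤ)) - Ht x 0 (i+1+(t:ℤ)-2*m)
      = ∑ k ∈ Finset.Icc ((i+1+(t:ℤ)-2*m)+1) (i+1+(t:ℤ)), (1 - 2 * (x k : ℤ)) := by
    rw [Ht]
    rw [hdiff]
    apply Finset.sum_congr rfl
    intro k _
    rw [Function.iterate_zero_apply]
  clear hdiff
  set a : ℤ := i + 1 + (t:ℤ) - 2*m + 1 with ha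
  have hsplit : Finset.Icc a (i+1+(t:ℤ)) =
      Finset.Icc a (a + (m:ℤ) - 1) ∪ Finset.Icc (a + m) ((a + m) + (m:ℤ) - 1) := by
    ext k
    simp only [Finset.mem_Icc, Finset.mem_union]
    omega
  have hdisj : Disjoint (Finset.Icc a (a + (m:ℤ) - 1))
      (Finset.Icc (a + m) ((a + m) + (m:ℤ) - 1)) := by
    simp only [Finset.disjoint_left, Finset.mem_Icc]
    intro k hk hk'
    omega
  have hsum : ∑ k ∈ Finset.Icc a (i+1+(t:ℤ)), (1 - 2 * (x k : ℤ))
      = ∑ k ∈ Finset.Icc a (a + (m:ℤ) - 1), (1 - 2 * (x k : ℤ))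
        + ∑ k ∈ Finset.Icc (a + m) ((a + m) + (m:ℤ) - 1), (1 - 2 * (x k : ℤ)) := by
    rw [hsplit, Finset.sum_union hdisj]
  -- each block sum: ∑ (1 - 2 x k) = m - 2 ∑ x k ≥ 0 by hwin
  have hblock : ∀ b : ℤ, (n:ℤ) ≤ b →
      0 ≤ ∑ k ∈ Finset.Icc b (b + (m:ℤ) - 1), (1 - 2 * (x k : ℤ)) := by
    intro b hb
    have hw := hwin b hb
    have hcard : (Finset.Icc b (b + (m:ℤ) - 1)).card = m := by
      rw [Int.card_Icc]
      omega
    have : ∑ k ∈ Finset.Icc b (b + (m:ℤ) - 1), (1 - 2 * (x k : ℤ))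
        = (m:ℤ) - 2 * ∑ k ∈ Finset.Icc b (b + (m:ℤ) - 1), (x k : ℤ) := by
      rw [Finset.sum_sub_distrib, Finset.sum_const, hcard, ← Finset.mul_sum]
      push_cast
      ring
    omega
  have hb1 : (n:ℤ) ≤ a := by omega
  have hb2 : (n:ℤ) ≤ a + m := by omega
  have h01 := hblock a hb1
  have h02 := hblock (a + m) hb2
  -- but total window sum ≤ -2
  omega




lemma diff_abs_le {p q : ℕ} (hp : p ≤ 1) (hq : q ≤ 1) : |(p:ℝ) - (q:ℝ)| ≤ 1 := by
  interval_cases p <;> interval_cases q <;> norm_num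

lemma geo_eq (i : ℤ) : (2 : ℝ) ^ (-|i|) = (1/2 : ℝ) ^ i.natAbs := by
  rw [Int.abs_eq_natAbs, zpow_neg, zpow_natCast, one_div, inv_pow]

lemma summable_geo : Summable (fun i : ℤ => (2 : ℝ) ^ (-|i|)) := by
  have h : Summable (fun i : ℤ => (1/2 : ℝ) ^ i.natAbs) := by
    apply Summable.of_nat_of_neg <;>
    · apply Summable.congr (summable_geometric_of_lt_one (by norm_num) (by norm_num :
        (1/2:ℝ) < 1))
      intro n
      simp
  exact h.congr fun i => (geo_eq i).symm

noncomputable def Bconst : ℝ := ∑' i : ℤ, (2 : ℝ) ^ (-|i|)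

lemma Bconst_nonneg : 0 ≤ Bconst :=
  tsum_nonneg fun i => by positivity

lemma cdist_term_le {u v : ℤ → ℕ} (hu : ∀ i, u i ≤ 1) (hv : ∀ i, v i ≤ 1) (i : ℤ) :
    (2 : ℝ) ^ (-|i|) * |(u i : ℝ) - (v i : ℝ)| ≤ (2 : ℝ) ^ (-|i|) := by
  have h1 : |(u i : ℝ) - (v i : ℝ)| ≤ 1 := diff_abs_le (hu i) (hv i)
  calc (2 : ℝ) ^ (-|i|) * |(u i : ℝ) - (v i : ℝ)| ≤ (2 : ℝ) ^ (-|i|) * 1 := by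
        apply mul_le_mul_of_nonneg_left h1 (by positivity)
    _ = (2 : ℝ) ^ (-|i|) := mul_one _

lemma cdist_summable {u v : ℤ → ℕ} (hu : ∀ i, u i ≤ 1) (hv : ∀ i, v i ≤ 1) :
    Summable (fun i : ℤ => (2 : ℝ) ^ (-|i|) * |(u i : ℝ) - (v i : ℝ)|) := by
  apply Summable.of_nonneg_of_le (fun i => by positivity) (cdist_term_le hu hv) summable_geo

lemma cdist_le_B {u v : ℤ → ℕ} (hu : ∀ i, u i ≤ 1) (hv : ∀ i, v i ≤ 1) :
    cdist u v ≤ Bconst :=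
  Summable.tsum_le_tsum (cdist_term_le hu hv) (cdist_summable hu hv) summable_geo

lemma distToFree_le {u : ℤ → ℕ} (hu : ∀ i, u i ≤ 1) {y : ℤ → ℕ} (hy : y ∈ FreeSet) :
    distToFree u ≤ cdist u y := by
  apply csInf_le
  · refine ⟨0, fun z hz => ?_⟩
    obtain ⟨w, _, rfl⟩ := hz
    exact tsum_nonneg fun i => by positivity
  · exact ⟨y, hy, rfl⟩

lemma zero_mem_free : (fun _ : ℤ => 0) ∈ FreeSet := ⟨fun _ => by norm_num, fun _ => rfl⟩

lemma cdist_le_tail {u v : ℤ → ℕ} (hu : ∀ i, u i ≤ 1) (hv : ∀ i, v i ≤ 1)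
    {a : ℤ} (ha : a ≤ 0) (hagree : ∀ i, a ≤ i → u i = v i) :
    cdist u v ≤ Bconst * (2 : ℝ) ^ a := by
  have hφsum : Summable (fun i : ℤ => (2:ℝ) ^ a * (2:ℝ) ^ (-|i - a|)) := by
    apply Summable.mul_left
    have : Summable ((fun i : ℤ => (2:ℝ) ^ (-|i|)) ∘ (Equiv.subRight a)) :=
      (Equiv.subRight a).summable_iff.mpr summable_geo
    exact this
  have hbound : ∀ i : ℤ, (2 : ℝ) ^ (-|i|) * |(u i : ℝ) - (v i : ℝ)|
      ≤ (2:ℝ) ^ a * (2:ℝ) ^ (-|i - a|) := by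
    intro i
    rcases le_or_gt a i with h | h
    · rw [hagree i h]
      simp
      positivity
    · have e1 : (2:ℝ) ^ (-|i|) = (2:ℝ) ^ a * (2:ℝ) ^ (-|i - a|) := by
        rw [abs_of_neg (by omega : i < 0), abs_of_neg (by omega : i - a < 0),
          ← zpow_add₀ (by norm_num : (2:ℝ) ≠ 0)]
        congr 1
        omega
      rw [e1]
      calc (2:ℝ) ^ a * (2:ℝ) ^ (-|i - a|) * |(u i : ℝ) - (v i : ℝ)|
          ≤ (2:ℝ) ^ a * (2:ℝ) ^ (-|i - a|) * 1 := by
            exact mul_le_mul_of_nonneg_left (diff_abs_le (hu i) (hv i)) (by positivity)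
        _ = (2:ℝ) ^ a * (2:ℝ) ^ (-|i - a|) := mul_one _
  have h1 : cdist u v ≤ ∑' i : ℤ, (2:ℝ) ^ a * (2:ℝ) ^ (-|i - a|) :=
    Summable.tsum_le_tsum hbound (cdist_summable hu hv) hφsum
  have h2 : ∑' i : ℤ, (2:ℝ) ^ a * (2:ℝ) ^ (-|i - a|) = (2:ℝ) ^ a * Bconst := by
    rw [tsum_mul_left]
    congr 1
    exact (Equiv.subRight a).tsum_eq (fun i => (2:ℝ) ^ (-|i|))
  rw [h2] at h1
  linarith

/-- If ρ₊(x,1) ≤ 1/2 and moreover there are n, m such that every length-m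
window x[i, i+m-1] with i ≥ n has at most half its entries equal to one,
then dist(Tᵗx, Free) ≤ C·2^{-t} for some constant C. -/
theorem exp_convergence_to_free (x : ℤ → ℕ) (hx : ∀ i, x i ≤ 1)
    (hρ : rhoPlus x ≤ 1 / 2) (n m : ℕ) (hm : 0 < m)
    (hwin : ∀ i : ℤ, (n : ℤ) ≤ i →
      2 * (∑ j ∈ Finset.Icc i (i + (m : ℤ) - 1), (x j : ℤ)) ≤ m) :
    ∃ C : ℝ, ∀ t : ℕ, distToFree (T^[t] x) ≤ C * (2 : ℝ) ^ (-(t : ℤ)) := by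
  refine ⟨Bconst * (2:ℝ) ^ ((n:ℤ) + 2*m), fun t => ?_⟩
  have hxt : ∀ i, T^[t] x i ≤ 1 := iter_le_one hx t
  by_cases hcase : (t:ℤ) ≤ (n:ℤ) + 2*m
  · have h1 : distToFree (T^[t] x) ≤ cdist (T^[t] x) (fun _ => 0) :=
      distToFree_le hxt zero_mem_free
    have h2 : cdist (T^[t] x) (fun _ => 0) ≤ Bconst := cdist_le_B hxt (fun _ => by norm_num)
    have h3 : Bconst ≤ Bconst * (2:ℝ) ^ ((n:ℤ) + 2*m) * (2:ℝ) ^ (-(t:ℤ)) := by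
      rw [mul_assoc, ← zpow_add₀ (by norm_num : (2:ℝ) ≠ 0)]
      nth_rewrite 1 [← mul_one Bconst]
      apply mul_le_mul_of_nonneg_left _ Bconst_nonneg
      exact one_le_zpow₀ (by norm_num) (by omega)
    linarith
  · set a : ℤ := (n:ℤ) + 2*m - 2 - t with ha
    have hm' : (m:ℤ) ≤ (t:ℤ) := by omega
    set y : ℤ → ℕ := fun k => if k < a then 0 else T^[t] x k with hy
    have hyle : ∀ i, y i ≤ 1 := by
      intro i
      by_cases h : i < a
      · simp [hy, h]
      · simpa [hy, h] using hxt i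
    have hyfree : y ∈ FreeSet := by
      refine ⟨hyle, fun i => ?_⟩
      by_cases h : i < a
      · simp [hy, h]
      · have h' : ¬ (i + 1 < a) := by omega
        have hnj := noJam hx n m hm hwin t i hm' (by omega)
        simp only [hy, if_neg h, if_neg h']
        rcases Nat.le_one_iff_eq_zero_or_eq_one.mp (hxt i) with e | e
        · simp [e]
        · rcases Nat.le_one_iff_eq_zero_or_eq_one.mp (hxt (i+1)) with e' | e'
          · simp [e']
          · exact absurd ⟨e, e'⟩ hnj
    have hagree : ∀ i, a ≤ i → T^[t] x i = y i := by
      intro i h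
      simp [hy, not_lt.mpr h]
    have h1 : distToFree (T^[t] x) ≤ cdist (T^[t] x) y := distToFree_le hxt hyfree
    have h2 : cdist (T^[t] x) y ≤ Bconst * (2:ℝ) ^ a :=
      cdist_le_tail hxt hyle (by omega) hagree
    have h3 : Bconst * (2:ℝ)^a ≤ Bconst * (2:ℝ) ^ ((n:ℤ)+2*m) * (2:ℝ)^(-(t:ℤ)) := by
      rw [mul_assoc, ← zpow_add₀ (by norm_num : (2:ℝ) ≠ 0)]
      apply mul_le_mul_of_nonneg_left _ Bconst_nonneg
      apply zpow_le_zpow_right₀ (by norm_num : (1:ℝ) ≤ 2)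
      omega
    linarith
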